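/- The pair e₁ := 1, e_{s₁} := x^{-1}(1 − ax)(1 − bx) is a basis of A as a module over A₀, and it diagonalises T₁: one has T₁(e₁) = τ₁ e₁ and T₁(e_{s₁}) = τ₁ (ab)^{-1} e_{s₁}. -/

import Mathlib

open LaurentPolynomial

theorem askey_wilson_basis_diagonalises_T1
    {K : Type*} [Field K] (a b τ₁ τt₁ : Kˣ)
    (hprod : τ₁ * τt₁ = a) (hquot : τ₁ * τt₁⁻¹ = -b) (hab : (a : K) * (b : K) ≠ 1)
    (s₁ : LaurentPolynomial K ≃ₐ[K] LaurentPolynomial K)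
    (hs₁ : s₁ (LaurentPolynomial.T 1) = LaurentPolynomial.T (-1))
    (A₀ : Subalgebra K (LaurentPolynomial K))
    (hA₀ : A₀ = AlgHom.equalizer (s₁ : LaurentPolynomial K →ₐ[K] LaurentPolynomial K)
      (AlgHom.id K (LaurentPolynomial K)))
    (T₁ : LaurentPolynomial K →ₗ[K] LaurentPolynomial K)
    (hT₁ : ∀ f : LaurentPolynomial K,
      (1 - LaurentPolynomial.T 2) * T₁ f =
        (1 - LaurentPolynomial.T 2) * ((τ₁ : K) • s₁ f) +
          (LaurentPolynomial.C ((τ₁ : K) - ((τ₁⁻¹ : Kˣ) : K)) +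
            LaurentPolynomial.C ((τt₁ : K) - ((τt₁⁻¹ : Kˣ) : K)) * LaurentPolynomial.T 1) *
            (f - s₁ f))
    (e : LaurentPolynomial K)
    (he : e = LaurentPolynomial.T (-1) *
      (1 - LaurentPolynomial.C (a : K) * LaurentPolynomial.T 1) *
      (1 - LaurentPolynomial.C (b : K) * LaurentPolynomial.T 1)) :
    LinearIndependent A₀ ![(1 : LaurentPolynomial K), e] ∧
    Submodule.span A₀ ({(1 : LaurentPolynomial K), e} : Set (LaurentPolynomial K)) = ⊤ ∧
    T₁ 1 = (τ₁ : K) • (1 : LaurentPolynomial K) ∧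
    T₁ e = ((τ₁ : K) * ((a : K) * (b : K))⁻¹) • e := by
  -- basic facts
  have hXY : (T 1 : LaurentPolynomial K) * T (-1) = 1 := by rw [← T_add]; norm_num
  have hYne : (T (-1) : LaurentPolynomial K) ≠ 0 := (isUnit_T (-1)).ne_zero
  have hsY : s₁ (T (-1)) = (T 1 : LaurentPolynomial K) := by
    have h1 : s₁ (T 1) * s₁ (T (-1)) = 1 := by rw [← map_mul, hXY, map_one]
    rw [hs₁] at h1
    have h2 : (T (-1) : LaurentPolynomial K) * T 1 = 1 := by rw [mul_comm]; exact hXY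
    exact mul_left_cancel₀ hYne (h1.trans h2.symm)
  have hsC : ∀ r : K, s₁ (C r) = C r := fun r => by
    rw [C_eq_algebraMap]; exact s₁.commutes r
  have h2ne : (1 : LaurentPolynomial K) - T 2 ≠ 0 := by
    refine sub_ne_zero.mpr fun h => ?_
    have h' : (T 0 : LaurentPolynomial K) = T 2 := by rwa [T_zero]
    have := congrArg degree h'
    simp only [degree_T] at this
    exact absurd this (by decide)
  -- scalar relations
  have hu0 : (τ₁ : K) ≠ 0 := Units.ne_zero τ₁
  have hv0 : (τt₁ : K) ≠ 0 := Units.ne_zero τt₁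
  have ha : (τ₁ : K) * (τt₁ : K) = (a : K) := by
    have := congrArg Units.val hprod; push_cast at this; exact this
  have hb : (τ₁ : K) * ((τt₁ : K))⁻¹ = -(b : K) := by
    have := congrArg Units.val hquot
    simpa [Units.val_mul, Units.val_inv_eq_inv_val] using this
  have hab2 : (a : K) * (b : K) = -((τ₁ : K) * (τ₁ : K)) := by
    linear_combination (-((τ₁ : K) * (τ₁ : K))) * (mul_inv_cancel₀ hv0) +
      ((τ₁ : K) * ((τt₁ : K))⁻¹) * ha + (a : K) * hb
  have hμ : (τ₁ : K) * ((a : K) * (b : K))⁻¹ = -((τ₁ : K))⁻¹ := by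
    rw [hab2]; field_simp
  -- normal form of e and s₁ e
  have he' : e = T (-1) - (C (a : K) + C (b : K)) + C (a : K) * C (b : K) * T 1 := by
    rw [he]
    linear_combination (C (a : K) * C (b : K) * (T 1 : LaurentPolynomial K)
      - C (a : K) - C (b : K)) * hXY
  have hse : s₁ e = T 1 - (C (a : K) + C (b : K)) + C (a : K) * C (b : K) * T (-1) := by
    rw [he']; simp only [map_add, map_sub, map_mul, hs₁, hsY, hsC]
  have hCa : C (a : K) = C ((τ₁ : K)) * C ((τt₁ : K)) := by rw [← map_mul, ha]
  have hCb : C (b : K) = -(C ((τ₁ : K)) * C (((τt₁ : K))⁻¹)) := by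
    rw [← map_mul, hb, map_neg, neg_neg]
  have hCu : C ((τ₁ : K)) * C (((τ₁ : K))⁻¹) = (1 : LaurentPolynomial K) := by
    rw [← map_mul, mul_inv_cancel₀ hu0, map_one]
  have hCv : C ((τt₁ : K)) * C (((τt₁ : K))⁻¹) = (1 : LaurentPolynomial K) := by
    rw [← map_mul, mul_inv_cancel₀ hv0, map_one]
  have hT2 : (T 2 : LaurentPolynomial K) = T 1 * T 1 := by
    rw [show (2 : ℤ) = 1 + 1 by norm_num, T_add]
  -- membership helpers
  have hmem : ∀ g : LaurentPolynomial K, s₁ g = g → g ∈ A₀ := by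
    intro g hg; rw [hA₀]
    exact (AlgHom.mem_equalizer _ _ _).mpr (by simpa using hg)
  have hinv : ∀ g : A₀, s₁ (g : LaurentPolynomial K) = (g : LaurentPolynomial K) := by
    rintro ⟨x, hx⟩
    rw [hA₀] at hx
    show s₁ x = x
    simpa using (AlgHom.mem_equalizer
      (s₁ : LaurentPolynomial K →ₐ[K] LaurentPolynomial K)
      (AlgHom.id K (LaurentPolynomial K)) x).mp hx
  have hcmem : ∀ r : K, C r ∈ A₀ := fun r => hmem _ (hsC r)
  have hymem : (T 1 + T (-1) : LaurentPolynomial K) ∈ A₀ :=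
    hmem _ (by rw [map_add, hs₁, hsY, add_comm])
  have hz_inv : s₁ (T 1 + T (-1) - C ((a : K) + (b : K))) =
      T 1 + T (-1) - C ((a : K) + (b : K)) := by
    simp only [map_sub, map_add, hs₁, hsY, hsC]; ring
  have hzmem : (T 1 + T (-1) - C ((a : K) + (b : K)) : LaurentPolynomial K) ∈ A₀ :=
    hmem _ hz_inv
  have he2 : e = (T 1 + T (-1) - C ((a : K) + (b : K))) +
      C ((a : K) * (b : K) - 1) * T 1 := by
    rw [he']; simp only [map_sub, map_add, map_mul, map_one]; ring
  have hcne : ((a : K) * (b : K) - 1) ≠ 0 := sub_ne_zero.mpr hab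
  -- span facts
  have h1S : (1 : LaurentPolynomial K) ∈ Submodule.span A₀
      ({(1 : LaurentPolynomial K), e} : Set (LaurentPolynomial K)) :=
    Submodule.subset_span (by simp)
  have heS : e ∈ Submodule.span A₀
      ({(1 : LaurentPolynomial K), e} : Set (LaurentPolynomial K)) :=
    Submodule.subset_span (by simp)
  have hXS : (T 1 : LaurentPolynomial K) ∈ Submodule.span A₀
      ({(1 : LaurentPolynomial K), e} : Set (LaurentPolynomial K)) := by
    have hCc : C (((a : K) * (b : K) - 1)⁻¹) * C ((a : K) * (b : K) - 1) =
        (1 : LaurentPolynomial K) := by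
      rw [← map_mul, inv_mul_cancel₀ hcne, map_one]
    have key : (T 1 : LaurentPolynomial K) =
        (⟨C (((a : K) * (b : K) - 1)⁻¹), hcmem _⟩ : A₀) • e -
        (⟨C (((a : K) * (b : K) - 1)⁻¹) * (T 1 + T (-1) - C ((a : K) + (b : K))),
          mul_mem (hcmem _) hzmem⟩ : A₀) • (1 : LaurentPolynomial K) := by
      show (T 1 : LaurentPolynomial K) =
        C (((a : K) * (b : K) - 1)⁻¹) * e -
        (C (((a : K) * (b : K) - 1)⁻¹) * (T 1 + T (-1) - C ((a : K) + (b : K)))) * 1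
      rw [he2]
      linear_combination (-(T 1 : LaurentPolynomial K)) * hCc
    rw [key]
    exact sub_mem (Submodule.smul_mem _ _ heS) (Submodule.smul_mem _ _ h1S)
  have hYS : (T (-1) : LaurentPolynomial K) ∈ Submodule.span A₀
      ({(1 : LaurentPolynomial K), e} : Set (LaurentPolynomial K)) := by
    have key : (T (-1) : LaurentPolynomial K) =
        (⟨T 1 + T (-1), hymem⟩ : A₀) • (1 : LaurentPolynomial K) - T 1 := by
      show (T (-1) : LaurentPolynomial K) = (T 1 + T (-1)) * 1 - T 1
      ring
    rw [key]
    exact sub_mem (Submodule.smul_mem _ _ h1S) hXS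
  have hrec : ∀ m : ℤ, (T 1 + T (-1) : LaurentPolynomial K) * T m = T (m + 1) + T (m - 1) := by
    intro m
    rw [add_mul, ← T_add, ← T_add, show (1 + m : ℤ) = m + 1 by ring,
      show (-1 + m : ℤ) = m - 1 by ring]
  have claim : ∀ n : ℕ,
      (T (n : ℤ) : LaurentPolynomial K) ∈ Submodule.span A₀
        ({(1 : LaurentPolynomial K), e} : Set (LaurentPolynomial K)) ∧
      (T ((n : ℤ) + 1) : LaurentPolynomial K) ∈ Submodule.span A₀
        ({(1 : LaurentPolynomial K), e} : Set (LaurentPolynomial K)) ∧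
      (T (-(n : ℤ)) : LaurentPolynomial K) ∈ Submodule.span A₀
        ({(1 : LaurentPolynomial K), e} : Set (LaurentPolynomial K)) ∧
      (T (-(n : ℤ) - 1) : LaurentPolynomial K) ∈ Submodule.span A₀
        ({(1 : LaurentPolynomial K), e} : Set (LaurentPolynomial K)) := by
    intro n
    induction n with
    | zero =>
      refine ⟨?_, ?_, ?_, ?_⟩
      · rw [show ((0 : ℕ) : ℤ) = 0 by norm_num, T_zero]; exact h1S
      · rw [show ((0 : ℕ) : ℤ) + 1 = 1 by norm_num]; exact hXS
      · rw [show -((0 : ℕ) : ℤ) = 0 by norm_num, T_zero]; exact h1S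
      · rw [show -((0 : ℕ) : ℤ) - 1 = -1 by norm_num]; exact hYS
    | succ n ih =>
      obtain ⟨h0, h1, h2, h3⟩ := ih
      refine ⟨?_, ?_, ?_, ?_⟩
      · rw [show (((n + 1 : ℕ)) : ℤ) = (n : ℤ) + 1 by push_cast; ring]; exact h1
      · rw [show (((n + 1 : ℕ)) : ℤ) + 1 = ((n : ℤ) + 1) + 1 by push_cast; ring]
        have key : (T ((n : ℤ) + 1 + 1) : LaurentPolynomial K) =
            (⟨T 1 + T (-1), hymem⟩ : A₀) • T ((n : ℤ) + 1) - T (n : ℤ) := by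
          show (T ((n : ℤ) + 1 + 1) : LaurentPolynomial K) =
            (T 1 + T (-1)) * T ((n : ℤ) + 1) - T (n : ℤ)
          rw [hrec ((n : ℤ) + 1), show ((n : ℤ) + 1 - 1) = (n : ℤ) by ring]
          ring
        rw [key]
        exact sub_mem (Submodule.smul_mem _ _ h1) h0
      · rw [show -(((n + 1 : ℕ)) : ℤ) = -(n : ℤ) - 1 by push_cast; ring]; exact h3
      · rw [show -(((n + 1 : ℕ)) : ℤ) - 1 = (-(n : ℤ) - 1) - 1 by push_cast; ring]
        have key : (T ((-(n : ℤ) - 1) - 1) : LaurentPolynomial K) =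
            (⟨T 1 + T (-1), hymem⟩ : A₀) • T (-(n : ℤ) - 1) - T (-(n : ℤ)) := by
          show (T ((-(n : ℤ) - 1) - 1) : LaurentPolynomial K) =
            (T 1 + T (-1)) * T (-(n : ℤ) - 1) - T (-(n : ℤ))
          rw [hrec (-(n : ℤ) - 1), show (-(n : ℤ) - 1 + 1) = -(n : ℤ) by ring]
          ring
        rw [key]
        exact sub_mem (Submodule.smul_mem _ _ h3) h2
  have hTmem : ∀ m : ℤ, (T m : LaurentPolynomial K) ∈ Submodule.span A₀
      ({(1 : LaurentPolynomial K), e} : Set (LaurentPolynomial K)) := by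
    intro m
    rcases le_or_gt 0 m with hm | hm
    · have := (claim m.toNat).1
      rwa [Int.toNat_of_nonneg hm] at this
    · have := (claim (-m).toNat).2.2.1
      rw [Int.toNat_of_nonneg (by omega)] at this
      rwa [neg_neg] at this
  refine ⟨?_, ?_, ?_, ?_⟩
  · -- linear independence
    rw [LinearIndependent.pair_iff]
    intro p q hpq
    have h1 : (p : LaurentPolynomial K) * 1 + (q : LaurentPolynomial K) *
        ((T 1 + T (-1) - C ((a : K) + (b : K))) + C ((a : K) * (b : K) - 1) * T 1) = 0 := by
      rw [← he2]; exact hpq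
    have h2 := congrArg s₁ h1
    simp only [map_add, map_sub, map_mul, map_one, map_zero, hinv p, hinv q, hsC, hs₁,
      hsY] at h2
    simp only [map_sub, map_mul, map_add, map_one] at h1
    have hXYne : (T 1 : LaurentPolynomial K) - T (-1) ≠ 0 := by
      refine sub_ne_zero.mpr fun h => ?_
      have := congrArg degree h
      simp only [degree_T] at this
      exact absurd this (by decide)
    have hCcne : C ((a : K) * (b : K) - 1) ≠ (0 : LaurentPolynomial K) := by
      intro h
      exact hcne ((map_eq_zero_iff (C : K →+* LaurentPolynomial K) (RingHom.injective _)).mp h)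
    have hCc2 : C ((a : K) * (b : K) - 1) = C (a : K) * C (b : K) - 1 := by
      simp only [map_sub, map_mul, map_one]
    have h3 : (q : LaurentPolynomial K) * C ((a : K) * (b : K) - 1) *
        (T 1 - T (-1)) = 0 := by rw [hCc2]; linear_combination h1 - h2
    have hq0 : (q : LaurentPolynomial K) = 0 := by
      rcases mul_eq_zero.mp h3 with h4 | h4
      · rcases mul_eq_zero.mp h4 with h5 | h5
        · exact h5
        · exact absurd h5 hCcne
      · exact absurd h4 hXYne
    have hp0 : (p : LaurentPolynomial K) = 0 := by
      have h1' : (p : LaurentPolynomial K) * 1 + (q : LaurentPolynomial K) * e = 0 := hpq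
      rw [hq0] at h1'
      simpa using h1'
    exact ⟨Subtype.ext hp0, Subtype.ext hq0⟩
  · -- span
    rw [eq_top_iff]
    rintro f -
    refine f.induction_on' (fun p q hp hq => add_mem hp hq) (fun n r => ?_)
    have : (C r * T n : LaurentPolynomial K) = (⟨C r, hcmem r⟩ : A₀) • T n := rfl
    rw [this]
    exact Submodule.smul_mem _ _ (hTmem n)
  · -- T₁ 1
    have h := hT₁ 1
    rw [show s₁ 1 = 1 from map_one s₁] at h
    simp only [sub_self, mul_zero, add_zero] at h
    exact mul_left_cancel₀ h2ne h
  · -- T₁ e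
    have h := hT₁ e
    refine mul_left_cancel₀ h2ne (h.trans ?_)
    simp only [Units.val_inv_eq_inv_val, Algebra.smul_def, ← C_eq_algebraMap]
    rw [hμ, map_neg, hse, he', hCa, hCb, hT2]
    simp only [map_sub]
    linear_combination
      (C (((τt₁ : K))⁻¹) - C (((τt₁ : K))⁻¹)*(T 1 : LaurentPolynomial K)^2 - C ((τt₁ : K)) + C ((τt₁ : K))*(T 1 : LaurentPolynomial K)^2 - C ((τ₁ : K))*C ((τt₁ : K))*C (((τt₁ : K))⁻¹)*(T (-1) : LaurentPolynomial K) + C ((τ₁ : K))*C ((τt₁ : K))*C (((τt₁ : K))⁻¹)*(T 1 : LaurentPolynomial K)^3) * hCu +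
      (-C ((τ₁ : K))*(T (-1) : LaurentPolynomial K) + C ((τ₁ : K))*(T 1 : LaurentPolynomial K)^3 - C ((τ₁ : K))^2*C (((τt₁ : K))⁻¹)*(T 1 : LaurentPolynomial K)*(T (-1) : LaurentPolynomial K) + C ((τ₁ : K))^2*C (((τt₁ : K))⁻¹)*(T 1 : LaurentPolynomial K)^2 + C ((τ₁ : K))^2*C ((τt₁ : K))*(T 1 : LaurentPolynomial K)*(T (-1) : LaurentPolynomial K) - C ((τ₁ : K))^2*C ((τt₁ : K))*(T 1 : LaurentPolynomial K)^2 - C ((τ₁ : K))^3*(T 1 : LaurentPolynomial K) + C ((τ₁ : K))^3*(T 1 : LaurentPolynomial K)^2*(T (-1) : LaurentPolynomial K)) * hCv +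
      (-C (((τt₁ : K))⁻¹) + C ((τt₁ : K)) - C (((τ₁ : K))⁻¹)*(T 1 : LaurentPolynomial K) - C ((τ₁ : K))^2*C (((τt₁ : K))⁻¹) + C ((τ₁ : K))^2*C ((τt₁ : K)) + C ((τ₁ : K))^3*(T 1 : LaurentPolynomial K)) * hXY
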